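/- Let K be an algebraically closed field of characteristic zero and let V, W be indecomposable finite-dimensional K[x,y]-modules with dim V = dim W ≥ 7. Then V and W are weakly isomorphic if and only if their associated Lie algebras L_V = K⟨P,Q⟩ ⋉ V and L_W = K⟨S,T⟩ ⋉ W are isomorphic as Lie algebras. -/

import Mathlib

/-- The bracket of the semidirect product `L_V = K⟨P,Q⟩ ⋉ V` on `(K × K) × V`. -/
def lieBk {K V : Type*} [Field K] [AddCommGroup V] [Module K V]
    (P Q : V →ₗ[K] V) (a b : (K × K) × V) : (K × K) × V :=
  (0, (a.1.1 • P + a.1.2 • Q) b.2 - (b.1.1 • P + b.1.2 • Q) a.2)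

/-- The abelian ideal `{0} ⊕ V` of `L_V`. -/
def vEmb (K V : Type*) [Field K] [AddCommGroup V] [Module K V] :
    Submodule K ((K × K) × V) :=
  (⊥ : Submodule K (K × K)).prod (⊤ : Submodule K V)

/-- The subalgebra `K⟨P,Q⟩ = K² ⊕ {0}` of `L_V`. -/
def pqEmb (K V : Type*) [Field K] [AddCommGroup V] [Module K V] :
    Submodule K ((K × K) × V) :=
  (⊤ : Submodule K (K × K)).prod (⊥ : Submodule K V)

/-- Weak isomorphism of the `K[x,y]`-modules given by operator pairs `(P,Q)` and
`(S,T)`: some twist of `(S,T)` by an invertible 2×2 matrix is isomorphic to `(P,Q)`. -/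
def WeakIso {K V W : Type*} [Field K] [AddCommGroup V] [Module K V]
    [AddCommGroup W] [Module K W] (P Q : V →ₗ[K] V) (S T : W →ₗ[K] W) : Prop :=
  ∃ M : Matrix (Fin 2) (Fin 2) K, IsUnit M ∧ ∃ e : V ≃ₗ[K] W,
    ∀ v, e (P v) = (M 0 0 • S + M 0 1 • T) (e v) ∧
         e (Q v) = (M 1 0 • S + M 1 1 • T) (e v)

/-- Indecomposability of the `K[x,y]`-module on V given by operators P, Q: V is
nonzero and not a direct sum of two nonzero submodules. -/
def IndecModule {K V : Type*} [Field K] [AddCommGroup V] [Module K V]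
    (P Q : V →ₗ[K] V) : Prop :=
  (∃ v : V, v ≠ 0) ∧
  ¬ ∃ A B : Submodule K V, (∀ v ∈ A, P v ∈ A ∧ Q v ∈ A) ∧
      (∀ v ∈ B, P v ∈ B ∧ Q v ∈ B) ∧ A ≠ ⊥ ∧ B ≠ ⊥ ∧ A ⊓ B = ⊥ ∧ A ⊔ B = ⊤


open Module

section helpers
variable {K : Type*} [Field K]

lemma dep_of_dt {z1 z2 : K × K} (h1 : z1 ≠ 0) (h : z1.1 * z2.2 - z1.2 * z2.1 = 0) :
    ∃ t : K, z2 = t • z1 := by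
  by_cases h11 : z1.1 = 0
  · have h12 : z1.2 ≠ 0 := fun h12 => h1 (Prod.ext h11 h12)
    have hz21 : z2.1 = 0 := by
      have : z1.2 * z2.1 = 0 := by rw [h11] at h; linear_combination -h
      exact (mul_eq_zero.mp this).resolve_left h12
    refine ⟨z2.2 / z1.2, Prod.ext ?_ ?_⟩
    · show z2.1 = z2.2 / z1.2 * z1.1
      rw [h11, hz21, mul_zero]
    · show z2.2 = z2.2 / z1.2 * z1.2
      field_simp
  · refine ⟨z2.1 / z1.1, Prod.ext ?_ ?_⟩
    · show z2.1 = z2.1 / z1.1 * z1.1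
      field_simp
    · show z2.2 = z2.1 / z1.1 * z1.2
      rw [div_mul_eq_mul_div, eq_div_iff h11]
      linear_combination h

lemma cramer2 {z1 z2 : K × K} (h : z1.1 * z2.2 - z1.2 * z2.1 ≠ 0) (y : K × K) :
    ∃ a b : K, y = a • z1 + b • z2 := by
  set d := z1.1 * z2.2 - z1.2 * z2.1 with hd
  refine ⟨(y.1 * z2.2 - y.2 * z2.1) / d, (z1.1 * y.2 - z1.2 * y.1) / d, Prod.ext ?_ ?_⟩
  · show y.1 = _ / d * z1.1 + _ / d * z2.1
    field_simp
    ring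
  · show y.2 = _ / d * z1.2 + _ / d * z2.2
    field_simp
    ring

lemma not_line (z : K × K) : ¬ ∀ y : K × K, ∃ s : K, y = s • z := by
  intro hs
  obtain ⟨s1, hs1⟩ := hs (0, 1)
  obtain ⟨s2, hs2⟩ := hs (1, 0)
  have e1 : (0 : K) = s1 * z.1 := congrArg Prod.fst hs1
  have e2 : (1 : K) = s1 * z.2 := congrArg Prod.snd hs1
  have e3 : (1 : K) = s2 * z.1 := congrArg Prod.fst hs2
  have e4 : (0 : K) = s2 * z.2 := congrArg Prod.snd hs2
  have : (1 : K) * 1 = 0 := by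
    calc (1:K) * 1 = (s2 * z.1) * (s1 * z.2) := by rw [← e3, ← e2]
    _ = (s1 * z.1) * (s2 * z.2) := by ring
    _ = 0 := by rw [← e1]; ring
  simp at this
end helpers


lemma indec_contra {K W : Type*} [Field K] [AddCommGroup W] [Module K W]
    [FiniteDimensional K W] (S T : W →ₗ[K] W) (X0 : Submodule K W)
    (hrank : finrank K W - 2 ≤ finrank K X0)
    (him : ∀ w : W, S w ∈ X0 ∧ T w ∈ X0)
    (hker : ∀ x ∈ X0, S x = 0 ∧ T x = 0)
    (hn : 7 ≤ finrank K W) : ¬ IndecModule S T := by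
  rintro ⟨⟨w0, hw0⟩, hInd⟩
  by_cases hST : S = 0 ∧ T = 0
  · apply hInd
    obtain ⟨B, hB⟩ := Submodule.exists_isCompl (Submodule.span K {w0})
    refine ⟨Submodule.span K {w0}, B, ?_, ?_, ?_, ?_, hB.inf_eq_bot, hB.sup_eq_top⟩
    · intro v _; simp [hST.1, hST.2]
    · intro v _; simp [hST.1, hST.2]
    · simpa [Submodule.span_singleton_eq_bot] using hw0
    · intro hBbot
      rw [hBbot] at hB
      have htop : Submodule.span K {w0} = ⊤ := by
        have := hB.sup_eq_top; simpa using this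
      have h1 : finrank K (Submodule.span K ({w0} : Set W)) = 1 := finrank_span_singleton hw0
      rw [htop, finrank_top] at h1
      omega
  · have hNne : (LinearMap.ker S ⊓ LinearMap.ker T : Submodule K W) ≠ ⊤ := by
      intro hNt
      apply hST
      constructor <;> ext w <;> simp only [LinearMap.zero_apply]
      · exact ((Submodule.eq_top_iff'.mp hNt) w).1
      · exact ((Submodule.eq_top_iff'.mp hNt) w).2
    set N : Submodule K W := LinearMap.ker S ⊓ LinearMap.ker T with hN
    have hX0N : X0 ≤ N := by
      intro x hx
      exact ⟨LinearMap.mem_ker.2 (hker x hx).1, LinearMap.mem_ker.2 (hker x hx).2⟩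
    set J : Submodule K W := LinearMap.range S ⊔ LinearMap.range T with hJ
    have hJX : J ≤ X0 := by
      rw [hJ]
      apply sup_le
      · rintro _ ⟨w, rfl⟩; exact (him w).1
      · rintro _ ⟨w, rfl⟩; exact (him w).2
    have hfN : finrank K W - 2 ≤ finrank K N := le_trans hrank (Submodule.finrank_mono hX0N)
    have hkerS : finrank K W - 2 ≤ finrank K (LinearMap.ker S) :=
      le_trans hfN (Submodule.finrank_mono inf_le_left)
    have hkerT : finrank K W - 2 ≤ finrank K (LinearMap.ker T) :=
      le_trans hfN (Submodule.finrank_mono inf_le_right)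
    have hrnS := LinearMap.finrank_range_add_finrank_ker S
    have hrnT := LinearMap.finrank_range_add_finrank_ker T
    have hJle : finrank K J ≤ 4 := by
      have h2 := Submodule.finrank_sup_add_finrank_inf_eq (LinearMap.range S) (LinearMap.range T)
      rw [← hJ] at h2
      omega
    obtain ⟨C, hC⟩ := Submodule.exists_isCompl N
    have hCne : C ≠ ⊥ := by
      intro hCbot
      rw [hCbot] at hC
      exact hNne (by simpa using hC.sup_eq_top)
    have hJN : J ≤ N := le_trans hJX hX0N
    obtain ⟨Z', hZ'⟩ := Submodule.exists_isCompl (Submodule.comap N.subtype J)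
    set Z : Submodule K W := Z'.map N.subtype with hZdef
    have hZN : Z ≤ N := by
      rintro _ ⟨z, _, rfl⟩; exact z.2
    have hmapJ : (Submodule.comap N.subtype J).map N.subtype = J := by
      rw [Submodule.map_comap_subtype, inf_eq_right.mpr hJN]
    have hZJsup : Z ⊔ J = N := by
      rw [hZdef, ← hmapJ, ← Submodule.map_sup, sup_comm, hZ'.sup_eq_top, Submodule.map_top,
        Submodule.range_subtype]
    have hZJinf : Z ⊓ J = ⊥ := by
      rw [hZdef, ← hmapJ, ← Submodule.map_inf _ N.injective_subtype, inf_comm, hZ'.inf_eq_bot,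
        Submodule.map_bot]
    have hfZ : 1 ≤ finrank K Z := by
      have h5 : finrank K W - 2 ≤ finrank K ((Z ⊔ J : Submodule K W)) := by rw [hZJsup]; exact hfN
      have h6 := Submodule.finrank_sup_add_finrank_inf_eq Z J
      rw [hZJinf] at h6
      rw [finrank_bot] at h6
      omega
    apply hInd
    refine ⟨Z, C ⊔ J, ?_, ?_, ?_, ?_, ?_, ?_⟩
    · intro v hv
      obtain ⟨h1, h2⟩ := Submodule.mem_inf.mp (hZN hv)
      rw [LinearMap.mem_ker] at h1 h2
      rw [h1, h2]
      exact ⟨Z.zero_mem, Z.zero_mem⟩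
    · intro v _
      constructor
      · exact Submodule.mem_sup_right ((le_sup_left : LinearMap.range S ≤ J) ⟨v, rfl⟩)
      · exact Submodule.mem_sup_right ((le_sup_right : LinearMap.range T ≤ J) ⟨v, rfl⟩)
    · intro hZbot; rw [hZbot, finrank_bot] at hfZ; omega
    · intro hbot
      apply hCne
      rw [← le_bot_iff, ← hbot]
      exact le_sup_left
    · apply le_bot_iff.mp
      intro z hz
      obtain ⟨hz1, hz2⟩ := Submodule.mem_inf.mp hz
      obtain ⟨c, hc, j, hj, rfl⟩ := Submodule.mem_sup.mp hz2
      have hcN : c ∈ N := by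
        have he : c = (c + j) - j := by abel
        rw [he]
        exact N.sub_mem (hZN hz1) (hJN hj)
      have hc0 : c = 0 := by
        have hm : c ∈ C ⊓ N := ⟨hc, hcN⟩
        rw [inf_comm, hC.inf_eq_bot] at hm
        simpa using hm
      rw [hc0, zero_add]
      have hm : j ∈ Z ⊓ J := ⟨by simpa [hc0] using hz1, hj⟩
      rw [hZJinf] at hm
      simpa using hm
    · rw [sup_comm C J, ← sup_assoc, hZJsup, hC.sup_eq_top]


lemma buildE {K V W : Type*} [Field K] [AddCommGroup V] [Module K V]
    [AddCommGroup W] [Module K W] [FiniteDimensional K V] [FiniteDimensional K W]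
    (h : V →ₗ[K] W) (l : V →ₗ[K] K) (v0 : V) (c : W)
    (hdim : finrank K V = finrank K W)
    (hinj : ∀ v, l v = 0 → h v = 0 → v = 0)
    (hc : h v0 + c ∉ Submodule.map h (LinearMap.ker l))
    (hv0 : l v0 = 1) :
    ∃ e : V ≃ₗ[K] W, ∀ v, e v = h v + l v • c := by
  set e0 : V →ₗ[K] W := h + l.smulRight c with he0
  have he0app : ∀ v, e0 v = h v + l v • c := fun v => rfl
  have hinj0 : Function.Injective e0 := by
    rw [← LinearMap.ker_eq_bot]
    apply (Submodule.eq_bot_iff _).mpr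
    intro v hv
    rw [LinearMap.mem_ker] at hv
    rw [he0app] at hv
    by_cases hl : l v = 0
    · exact hinj v hl (by rw [hl, zero_smul, add_zero] at hv; exact hv)
    · exfalso
      apply hc
      have hu : l (v - l v • v0) = 0 := by simp [hv0]
      have humem : h (v - l v • v0) ∈ Submodule.map h (LinearMap.ker l) :=
        ⟨v - l v • v0, LinearMap.mem_ker.mpr hu, rfl⟩
      have hval : h (v - l v • v0) = (- l v) • (h v0 + c) := by
        have hhv : h v = - (l v • c) := eq_neg_of_add_eq_zero_left hv
        rw [map_sub, map_smul, hhv]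
        module
      rw [hval] at humem
      have := Submodule.smul_mem _ (- l v)⁻¹ humem
      rwa [smul_smul, inv_mul_cancel₀ (neg_ne_zero.mpr hl), one_smul] at this
  refine ⟨e0.linearEquivOfInjective hinj0 hdim, ?_⟩
  intro v
  rw [LinearMap.linearEquivOfInjective_apply]
  exact he0app v

lemma core2bB {K V W : Type*} [Field K] [CharZero K] [AddCommGroup V] [Module K V]
    [AddCommGroup W] [Module K W] [FiniteDimensional K V] [FiniteDimensional K W]
    (P Q : V →ₗ[K] V) (S T : W →ₗ[K] W) (h : V →ₗ[K] W) (l : V →ₗ[K] K) (v0 : V)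
    (p m0 : K × K) (k : K) (w1 w2 : W)
    (hdim : finrank K V = finrank K W)
    (hv0 : l v0 = 1)
    (hlP : ∀ v, l (P v) = 0) (hlQ : ∀ v, l (Q v) = 0)
    (hinj : ∀ v, l v = 0 → h v = 0 → v = 0)
    (hXrank : finrank K (Submodule.map h (LinearMap.ker l)) + 1 = finrank K W)
    (E3P : ∀ v, h (P v) = (m0.1 • S + m0.2 • T) (h v) - l v • ((p.1 • S + p.2 • T) w1))
    (E3Q : ∀ v, h (Q v) = k • ((m0.1 • S + m0.2 • T) (h v)) - l v • ((p.1 • S + p.2 • T) w2))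
    (E4 : (m0.1 • S + m0.2 • T) w2 = k • ((m0.1 • S + m0.2 • T) w1))
    (hRh : ∀ v, (p.1 • S + p.2 • T) (h v) = l v • ((p.1 • S + p.2 • T) (h v0)))
    (hwt : w2 - k • w1 ∉ Submodule.map h (LinearMap.ker l))
    (hdt : m0.1 * p.2 - m0.2 * p.1 ≠ 0) :
    ∃ μ ν : K × K, μ.1 * ν.2 - μ.2 * ν.1 ≠ 0 ∧ ∃ e : V ≃ₗ[K] W,
      ∀ v, e (P v) = (μ.1 • S + μ.2 • T) (e v) ∧ e (Q v) = (ν.1 • S + ν.2 • T) (e v) := by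
  set X := Submodule.map h (LinearMap.ker l) with hX
  set R : W →ₗ[K] W := p.1 • S + p.2 • T with hRdef
  set wt : W := w2 - k • w1 with hwtdef
  set r0 : W := R (h v0) with hr0def
  -- selection of scalars
  have hsel : ∃ (a t1 t2 : K), t2 ≠ 0 ∧ (h v0 + a • wt ∉ X) ∧
      t1 • (r0 + a • R wt) = R w1 ∧ t2 • (r0 + a • R wt) = R wt := by
    by_cases hRz : R = 0
    · have hz : ∀ w, R w = 0 := fun w => by rw [hRz]; simp
      have ha : ∃ a : K, h v0 + a • wt ∉ X := by
        by_cases h0 : h v0 + (0 : K) • wt ∈ X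
        · refine ⟨1, fun h1 => hwt ?_⟩
          have hsub := X.sub_mem h1 h0
          have : h v0 + (1 : K) • wt - (h v0 + (0 : K) • wt) = wt := by module
          rwa [this] at hsub
        · exact ⟨0, h0⟩
      obtain ⟨a, ha⟩ := ha
      refine ⟨a, 0, 1, one_ne_zero, ha, ?_, ?_⟩
      · simp [hz]
      · simp [hz, hr0def]
    · have hXker : X ≤ LinearMap.ker R := by
        rintro _ ⟨v, hv, rfl⟩
        rw [LinearMap.mem_ker, hRh v, LinearMap.mem_ker.mp hv, zero_smul]
      have hkt : LinearMap.ker R ≠ ⊤ := by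
        intro hk
        apply hRz
        ext w
        simpa using LinearMap.mem_ker.mp ((Submodule.eq_top_iff'.mp hk) w)
      have hlt : finrank K (LinearMap.ker R) < finrank K W :=
        Submodule.finrank_lt hkt
      have hXeq : X = LinearMap.ker R :=
        Submodule.eq_of_le_of_finrank_le hXker (by omega)
      have hRwt : R wt ≠ 0 := by
        intro h0
        apply hwt
        rw [hXeq]
        exact LinearMap.mem_ker.mpr h0
      have hspan : X ⊔ Submodule.span K {wt} = ⊤ := by
        have hltX : X < X ⊔ Submodule.span K {wt} := by
          apply lt_of_le_of_ne le_sup_left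
          intro he
          apply hwt
          rw [he]
          exact Submodule.mem_sup_right (Submodule.mem_span_singleton_self wt)
        have hfr := Submodule.finrank_lt_finrank_of_lt hltX
        apply Submodule.eq_top_of_finrank_eq
        have hle := Submodule.finrank_le (X ⊔ Submodule.span K {wt})
        omega
      have hdec : ∀ w : W, ∃ (x : W) (ξ : K), x ∈ X ∧ w = x + ξ • wt := by
        intro w
        have hw : w ∈ X ⊔ Submodule.span K {wt} := by rw [hspan]; trivial
        obtain ⟨x, hx, y, hy, rfl⟩ := Submodule.mem_sup.mp hw
        obtain ⟨ξ, rfl⟩ := Submodule.mem_span_singleton.mp hy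
        exact ⟨x, ξ, hx, rfl⟩
      obtain ⟨x0, ρ, hx0, hv0dec⟩ := hdec (h v0)
      obtain ⟨x1, ρ1, hx1, hw1dec⟩ := hdec w1
      have hr0 : r0 = ρ • R wt := by
        rw [hr0def, hv0dec, map_add, map_smul,
          LinearMap.mem_ker.mp (hXeq ▸ hx0), zero_add]
      have hRw1 : R w1 = ρ1 • R wt := by
        rw [hw1dec, map_add, map_smul, LinearMap.mem_ker.mp (hXeq ▸ hx1), zero_add]
      have ha : ∃ a : K, ρ + a ≠ 0 ∧ h v0 + a • wt ∉ X := by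
        by_cases h0 : h v0 + (1 - ρ) • wt ∈ X
        · refine ⟨2 - ρ, by intro hc; apply (two_ne_zero : (2:K) ≠ 0); linear_combination hc, fun h1 => hwt ?_⟩
          have hsub := X.sub_mem h0 h1
          have heq : h v0 + (1 - ρ) • wt - (h v0 + (2 - ρ) • wt) = (-1 : K) • wt := by module
          rw [heq] at hsub
          have := X.smul_mem (-1 : K)⁻¹ hsub
          rw [smul_smul, inv_mul_cancel₀ (by norm_num), one_smul] at this
          exact this
        · exact ⟨1 - ρ, by intro hc; apply (one_ne_zero : (1:K) ≠ 0); linear_combination hc, h0⟩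
      obtain ⟨a, hane, haX⟩ := ha
      have hsum : r0 + a • R wt = (ρ + a) • R wt := by rw [hr0]; module
      refine ⟨a, ρ1 * (ρ + a)⁻¹, (ρ + a)⁻¹, inv_ne_zero hane, haX, ?_, ?_⟩
      · rw [hsum, hRw1, smul_smul, mul_assoc, inv_mul_cancel₀ hane, mul_one]
      · rw [hsum, smul_smul, inv_mul_cancel₀ hane, one_smul]
  obtain ⟨a, t1, t2, ht2, hcX, H1, H2⟩ := hsel
  obtain ⟨e, he⟩ := buildE h l v0 (a • wt) hdim hinj hcX hv0
  have F1 : (m0.1 • S + m0.2 • T) wt = 0 := by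
    rw [hwtdef, map_sub, map_smul, E4, sub_self]
  have F4 : R w2 = R wt + k • R w1 := by
    rw [hwtdef]; rw [map_sub, map_smul]; module
  refine ⟨(m0.1 - t1 * p.1, m0.2 - t1 * p.2),
      (k * m0.1 - (t2 + k * t1) * p.1, k * m0.2 - (t2 + k * t1) * p.2), ?_, e, ?_⟩
  · show (m0.1 - t1 * p.1) * (k * m0.2 - (t2 + k * t1) * p.2) -
      (m0.2 - t1 * p.2) * (k * m0.1 - (t2 + k * t1) * p.1) ≠ 0
    have hh : (m0.1 - t1 * p.1) * (k * m0.2 - (t2 + k * t1) * p.2) -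
        (m0.2 - t1 * p.2) * (k * m0.1 - (t2 + k * t1) * p.1)
        = -t2 * (m0.1 * p.2 - m0.2 * p.1) := by ring
    rw [hh]
    exact mul_ne_zero (neg_ne_zero.mpr ht2) hdt
  · intro v
    constructor
    · rw [he (P v), he v, E3P v, hlP v, zero_smul, add_zero]
      have expand : ((m0.1 - t1 * p.1) • S + (m0.2 - t1 * p.2) • T) (h v + l v • (a • wt))
          = (m0.1 • S + m0.2 • T) (h v) + (l v * a) • ((m0.1 • S + m0.2 • T) wt)
            - t1 • (R (h v)) - (t1 * (l v * a)) • (R wt) := by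
        rw [hRdef]
        simp only [LinearMap.add_apply, LinearMap.smul_apply, map_add, map_smul]
        module
      rw [expand, F1, hRh v]
      linear_combination (norm := module) (l v) • H1
    · rw [he (Q v), he v, E3Q v, hlQ v, zero_smul, add_zero]
      have expand : ((k * m0.1 - (t2 + k * t1) * p.1) • S + (k * m0.2 - (t2 + k * t1) * p.2) • T)
            (h v + l v • (a • wt))
          = k • ((m0.1 • S + m0.2 • T) (h v)) + (k * (l v * a)) • ((m0.1 • S + m0.2 • T) wt)
            - (t2 + k * t1) • (R (h v)) - ((t2 + k * t1) * (l v * a)) • (R wt) := by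
        rw [hRdef]
        simp only [LinearMap.add_apply, LinearMap.smul_apply, map_add, map_smul]
        module
      rw [expand, F1, hRh v, F4]
      linear_combination (norm := module) (l v) • H2 + (l v * k) • H1


lemma core2b {K V W : Type*} [Field K] [CharZero K] [AddCommGroup V] [Module K V]
    [AddCommGroup W] [Module K W] [FiniteDimensional K V] [FiniteDimensional K W]
    (P Q : V →ₗ[K] V) (S T : W →ₗ[K] W) (h : V →ₗ[K] W) (l : V →ₗ[K] K) (v0 : V)
    (p m0 m1 : K × K) (w1 w2 : W)
    (hdim : finrank K V = finrank K W)
    (hp : p ≠ 0)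
    (hv0 : l v0 = 1)
    (hlP : ∀ v, l (P v) = 0) (hlQ : ∀ v, l (Q v) = 0)
    (hinj : ∀ v, l v = 0 → h v = 0 → v = 0)
    (hXrank : finrank K (Submodule.map h (LinearMap.ker l)) + 1 = finrank K W)
    (E3P : ∀ v, h (P v) = (m0.1 • S + m0.2 • T) (h v) - l v • ((p.1 • S + p.2 • T) w1))
    (E3Q : ∀ v, h (Q v) = (m1.1 • S + m1.2 • T) (h v) - l v • ((p.1 • S + p.2 • T) w2))
    (E4 : (m0.1 • S + m0.2 • T) w2 = (m1.1 • S + m1.2 • T) w1)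
    (hRh : ∀ v, (p.1 • S + p.2 • T) (h v) = l v • ((p.1 • S + p.2 • T) (h v0)))
    (hIND : ∀ c1 c2 s : K, c1 • m0 + c2 • m1 = s • p →
      c1 • w1 + c2 • w2 - s • h v0 ∈ Submodule.map h (LinearMap.ker l) → c1 = 0 ∧ c2 = 0)
    (hSPAN : ∀ y : K × K, ∃ s c1 c2 : K, y = s • p + c1 • m0 + c2 • m1) :
    ∃ μ ν : K × K, μ.1 * ν.2 - μ.2 * ν.1 ≠ 0 ∧ ∃ e : V ≃ₗ[K] W,
      ∀ v, e (P v) = (μ.1 • S + μ.2 • T) (e v) ∧ e (Q v) = (ν.1 • S + ν.2 • T) (e v) := by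
  have E4e : m0.1 • S w2 + m0.2 • T w2 = m1.1 • S w1 + m1.2 • T w1 := by
    have := E4
    simpa only [LinearMap.add_apply, LinearMap.smul_apply] using this
  by_cases hA : m0.1 * m1.2 - m0.2 * m1.1 ≠ 0
  · -- Branch A : m0, m1 independent
    obtain ⟨s0, s1, hpe⟩ := cramer2 hA p
    set c : W := (-s0) • w1 + (-s1) • w2 with hc
    have hcX : h v0 + c ∉ Submodule.map h (LinearMap.ker l) := by
      intro hmem
      have h1 : (-s0) • m0 + (-s1) • m1 = (-1 : K) • p := by
        rw [hpe]; module
      have h2 : (-s0) • w1 + (-s1) • w2 - (-1 : K) • h v0 ∈ Submodule.map h (LinearMap.ker l) := by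
        have : (-s0) • w1 + (-s1) • w2 - (-1 : K) • h v0 = h v0 + c := by rw [hc]; module
        rw [this]; exact hmem
      obtain ⟨hs0, hs1⟩ := hIND (-s0) (-s1) (-1) h1 h2
      apply hp
      rw [hpe]
      rw [neg_eq_zero] at hs0 hs1
      rw [hs0, hs1]
      module
    obtain ⟨e, he⟩ := buildE h l v0 c hdim hinj hcX hv0
    have hOm0c : (m0.1 • S + m0.2 • T) c = -((p.1 • S + p.2 • T) w1) := by
      have hp1 : p.1 = s0 * m0.1 + s1 * m1.1 := by
        have := congrArg Prod.fst hpe; simpa using this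
      have hp2 : p.2 = s0 * m0.2 + s1 * m1.2 := by
        have := congrArg Prod.snd hpe; simpa using this
      rw [hc, hp1, hp2]
      simp only [LinearMap.add_apply, LinearMap.smul_apply, map_add, map_smul, map_neg]
      linear_combination (norm := module) (-s1 : K) • E4e
    have hOm1c : (m1.1 • S + m1.2 • T) c = -((p.1 • S + p.2 • T) w2) := by
      have hp1 : p.1 = s0 * m0.1 + s1 * m1.1 := by
        have := congrArg Prod.fst hpe; simpa using this
      have hp2 : p.2 = s0 * m0.2 + s1 * m1.2 := by
        have := congrArg Prod.snd hpe; simpa using this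
      rw [hc, hp1, hp2]
      simp only [LinearMap.add_apply, LinearMap.smul_apply, map_add, map_smul, map_neg]
      linear_combination (norm := module) (s0 : K) • E4e
    refine ⟨m0, m1, hA, e, ?_⟩
    intro v
    constructor
    · rw [he (P v), he v, E3P v, hlP v, zero_smul, add_zero, map_add, map_smul, hOm0c]
      module
    · rw [he (Q v), he v, E3Q v, hlQ v, zero_smul, add_zero, map_add, map_smul, hOm1c]
      module
  · -- Branch B : m0, m1 dependent
    push_neg at hA
    by_cases hm0 : m0 = 0
    · -- m0 = 0 : use swapped roles, k = 0
      have hm1 : m1 ≠ 0 := by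
        intro hm1
        apply not_line (K := K) p
        intro y
        obtain ⟨s, c1, c2, hy⟩ := hSPAN y
        exact ⟨s, by rw [hy, hm0, hm1]; module⟩
      have hdtm1 : m1.1 * p.2 - m1.2 * p.1 ≠ 0 := by
        intro hdt0
        obtain ⟨t, hpt⟩ := dep_of_dt hm1 hdt0
        apply not_line (K := K) m1
        intro y
        obtain ⟨s, c1, c2, hy⟩ := hSPAN y
        exact ⟨s * t + c2, by rw [hy, hpt, hm0]; module⟩
      have hw1X : w1 - (0 : K) • w2 ∉ Submodule.map h (LinearMap.ker l) := by
        intro hmem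
        have h1 : (1 : K) • m0 + (0 : K) • m1 = (0 : K) • p := by rw [hm0]; module
        have h2 : (1 : K) • w1 + (0 : K) • w2 - (0 : K) • h v0 ∈
            Submodule.map h (LinearMap.ker l) := by
          have he2 : (1 : K) • w1 + (0 : K) • w2 - (0 : K) • h v0 = w1 - (0 : K) • w2 := by
            module
          rw [he2]; exact hmem
        exact one_ne_zero (hIND 1 0 0 h1 h2).1
      have E3Q' : ∀ v, h (Q v) = (m1.1 • S + m1.2 • T) (h v) - l v • ((p.1 • S + p.2 • T) w2) :=
        E3Q
      have E3P' : ∀ v, h (P v) = (0 : K) • ((m1.1 • S + m1.2 • T) (h v)) -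
          l v • ((p.1 • S + p.2 • T) w1) := by
        intro v
        rw [E3P v, hm0]
        simp only [Prod.fst_zero, Prod.snd_zero, zero_smul, add_zero, zero_add,
          LinearMap.zero_apply, LinearMap.add_apply, LinearMap.smul_apply]
      have E4' : (m1.1 • S + m1.2 • T) w1 = (0 : K) • ((m1.1 • S + m1.2 • T) w2) := by
        rw [← E4, hm0]
        simp only [Prod.fst_zero, Prod.snd_zero, zero_smul, add_zero, zero_add,
          LinearMap.zero_apply, LinearMap.add_apply, LinearMap.smul_apply]
      obtain ⟨μ, ν, hd, e, hprop⟩ := core2bB Q P S T h l v0 p m1 0 w2 w1 hdim hv0 hlQ hlP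
        hinj hXrank E3Q' E3P' E4' hRh hw1X hdtm1
      refine ⟨ν, μ, ?_, e, fun v => ⟨(hprop v).2, (hprop v).1⟩⟩
      intro h0
      apply hd
      linear_combination -h0
    · -- m0 ≠ 0
      obtain ⟨k, hk⟩ := dep_of_dt hm0 hA
      have hdtm0 : m0.1 * p.2 - m0.2 * p.1 ≠ 0 := by
        intro hdt0
        obtain ⟨t, hpt⟩ := dep_of_dt hm0 hdt0
        apply not_line (K := K) m0
        intro y
        obtain ⟨s, c1, c2, hy⟩ := hSPAN y
        exact ⟨s * t + c1 + c2 * k, by rw [hy, hpt, hk]; module⟩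
      have hwtX : w2 - k • w1 ∉ Submodule.map h (LinearMap.ker l) := by
        intro hmem
        have h1 : (-k : K) • m0 + (1 : K) • m1 = (0 : K) • p := by rw [hk]; module
        have h2 : (-k : K) • w1 + (1 : K) • w2 - (0 : K) • h v0 ∈
            Submodule.map h (LinearMap.ker l) := by
          have he2 : (-k : K) • w1 + (1 : K) • w2 - (0 : K) • h v0 = w2 - k • w1 := by module
          rw [he2]; exact hmem
        exact one_ne_zero (hIND (-k) 1 0 h1 h2).2
      have hk1 : m1.1 = k * m0.1 := by have := congrArg Prod.fst hk; simpa using this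
      have hk2 : m1.2 = k * m0.2 := by have := congrArg Prod.snd hk; simpa using this
      have E3Q' : ∀ v, h (Q v) = k • ((m0.1 • S + m0.2 • T) (h v)) -
          l v • ((p.1 • S + p.2 • T) w2) := by
        intro v
        rw [E3Q v, hk1, hk2]
        simp only [LinearMap.add_apply, LinearMap.smul_apply]
        module
      have E4' : (m0.1 • S + m0.2 • T) w2 = k • ((m0.1 • S + m0.2 • T) w1) := by
        rw [E4, hk1, hk2]
        simp only [LinearMap.add_apply, LinearMap.smul_apply]
        module
      exact core2bB P Q S T h l v0 p m0 k w1 w2 hdim hv0 hlP hlQ hinj hXrank E3P E3Q' E4'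
        hRh hwtX hdtm0


-- helper : solve 2x2 homogeneous system in a module
lemma solve2 {K M : Type*} [Field K] [AddCommGroup M] [Module K M] {a1 a2 b1 b2 : K} {x y : M}
    (hd : a1 * b2 - a2 * b1 ≠ 0) (h1 : a1 • x + a2 • y = 0) (h2 : b1 • x + b2 • y = 0) :
    x = 0 ∧ y = 0 := by
  constructor
  · have h3 : (a1 * b2 - a2 * b1) • x = 0 := by
      linear_combination (norm := module) b2 • h1 - a2 • h2
    exact (smul_eq_zero.mp h3).resolve_left hd
  · have h3 : (a1 * b2 - a2 * b1) • y = 0 := by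
      linear_combination (norm := module) (-b1) • h1 + a1 • h2
    exact (smul_eq_zero.mp h3).resolve_left hd

-- helper : finrank of image of a kernel
lemma finrank_map_ker {K V U W : Type*} [Field K] [AddCommGroup V] [Module K V]
    [AddCommGroup U] [Module K U] [AddCommGroup W] [Module K W] [FiniteDimensional K V]
    (hm : V →ₗ[K] W) (g : V →ₗ[K] U)
    (hinj : ∀ v, g v = 0 → hm v = 0 → v = 0) :
    finrank K (Submodule.map hm (LinearMap.ker g)) = finrank K (LinearMap.ker g) := by
  have hr : Submodule.map hm (LinearMap.ker g) = LinearMap.range (hm ∘ₗ (LinearMap.ker g).subtype) := by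
    rw [LinearMap.range_comp, Submodule.range_subtype]
  rw [hr]
  apply LinearMap.finrank_range_of_inj
  rw [← LinearMap.ker_eq_bot]
  apply (Submodule.eq_bot_iff _).mpr
  intro x hx
  rw [LinearMap.mem_ker, LinearMap.comp_apply] at hx
  have : (x : V) = 0 := hinj x (LinearMap.mem_ker.mp x.2) hx
  exact Subtype.ext this

-- helper : construct scalar functional
lemma mk_ell {K V : Type*} [Field K] [AddCommGroup V] [Module K V]
    (g : V →ₗ[K] K × K) (p : K × K) (hp : p ≠ 0)
    (hdep : ∀ v, ∃ t : K, g v = t • p) : ∃ l : V →ₗ[K] K, ∀ v, g v = l v • p := by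
  by_cases h1 : p.1 = 0
  · have h2 : p.2 ≠ 0 := fun h2 => hp (Prod.ext h1 h2)
    refine ⟨p.2⁻¹ • ((LinearMap.snd K K K).comp g), ?_⟩
    intro v
    obtain ⟨t, ht⟩ := hdep v
    have : (g v).2 = t * p.2 := by rw [ht]; rfl
    rw [ht]
    simp only [LinearMap.smul_apply, LinearMap.comp_apply, LinearMap.snd_apply]
    rw [this]
    rw [smul_eq_mul]
    congr 1
    field_simp
  · refine ⟨p.1⁻¹ • ((LinearMap.fst K K K).comp g), ?_⟩
    intro v
    obtain ⟨t, ht⟩ := hdep v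
    have : (g v).1 = t * p.1 := by rw [ht]; rfl
    rw [ht]
    simp only [LinearMap.smul_apply, LinearMap.comp_apply, LinearMap.fst_apply]
    rw [this]
    rw [smul_eq_mul]
    congr 1
    field_simp

lemma packWeak {K V W : Type*} [Field K] [AddCommGroup V] [Module K V]
    [AddCommGroup W] [Module K W] (P Q : V →ₗ[K] V) (S T : W →ₗ[K] W)
    (hp : ∃ μ ν : K × K, μ.1 * ν.2 - μ.2 * ν.1 ≠ 0 ∧ ∃ e : V ≃ₗ[K] W,
      ∀ v, e (P v) = (μ.1 • S + μ.2 • T) (e v) ∧ e (Q v) = (ν.1 • S + ν.2 • T) (e v)) :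
    WeakIso P Q S T := by
  obtain ⟨μ, ν, hd, e, hprop⟩ := hp
  refine ⟨!![μ.1, μ.2; ν.1, ν.2], ?_, e, ?_⟩
  · rw [Matrix.isUnit_iff_isUnit_det, Matrix.det_fin_two_of]
    exact isUnit_iff_ne_zero.mpr hd
  · intro v
    have h00 : (!![μ.1, μ.2; ν.1, ν.2] : Matrix (Fin 2) (Fin 2) K) 0 0 = μ.1 := rfl
    have h01 : (!![μ.1, μ.2; ν.1, ν.2] : Matrix (Fin 2) (Fin 2) K) 0 1 = μ.2 := rfl
    have h10 : (!![μ.1, μ.2; ν.1, ν.2] : Matrix (Fin 2) (Fin 2) K) 1 0 = ν.1 := rfl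
    have h11 : (!![μ.1, μ.2; ν.1, ν.2] : Matrix (Fin 2) (Fin 2) K) 1 1 = ν.2 := rfl
    rw [h00, h01, h10, h11]
    exact hprop v

theorem backward {K V W : Type*} [Field K] [CharZero K]
    [AddCommGroup V] [Module K V] [AddCommGroup W] [Module K W]
    [FiniteDimensional K V] [FiniteDimensional K W]
    (P Q : V →ₗ[K] V) (S T : W →ₗ[K] W)
    (hW : IndecModule S T)
    (hdim : Module.finrank K V = Module.finrank K W)
    (hdim7 : 7 ≤ Module.finrank K V)
    (φ : ((K × K) × V) ≃ₗ[K] ((K × K) × W))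
    (hφ : ∀ a b, φ (lieBk P Q a b) = lieBk S T (φ a) (φ b)) :
    WeakIso P Q S T := by
  classical
  set x1 : (K × K) × V := (((1:K), (0:K)), (0:V)) with hx1
  set x2 : (K × K) × V := (((0:K), (1:K)), (0:V)) with hx2
  set m0 : K × K := (φ x1).1 with hm0
  set w1 : W := (φ x1).2 with hw1
  set m1 : K × K := (φ x2).1 with hm1
  set w2 : W := (φ x2).2 with hw2
  set F : V →ₗ[K] (K × K) × W := (φ : ((K × K) × V) →ₗ[K] ((K × K) × W)) ∘ₗ
    LinearMap.inr K (K × K) V with hF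
  set G : V →ₗ[K] K × K := (LinearMap.fst K (K × K) W) ∘ₗ F with hG
  set H : V →ₗ[K] W := (LinearMap.snd K (K × K) W) ∘ₗ F with hH
  have hfv : ∀ v : V, φ ((0 : K × K), v) = (G v, H v) := fun v => rfl
  have hφ1 : φ x1 = (m0, w1) := rfl
  have hφ2 : φ x2 = (m1, w2) := rfl
  -- E1
  have E1 : ∀ v v' : V, (G v).1 • S (H v') + (G v).2 • T (H v')
      = (G v').1 • S (H v) + (G v').2 • T (H v) := by
    intro v v'
    have h0 := hφ ((0 : K × K), v) ((0 : K × K), v')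
    have hz : lieBk P Q ((0 : K × K), v) ((0 : K × K), v') = 0 := by
      simp [lieBk]
    rw [hz, map_zero, hfv, hfv] at h0
    have h1 := congrArg Prod.snd h0
    simp only [lieBk, Prod.snd_zero] at h1
    have h2 : (0:W) = ((G v).1 • S + (G v).2 • T) (H v') - ((G v').1 • S + (G v').2 • T) (H v) := h1
    have h3 := sub_eq_zero.mp h2.symm
    simpa only [LinearMap.add_apply, LinearMap.smul_apply] using h3
  -- E3
  have E3P : ∀ v : V, G (P v) = 0 ∧ H (P v)
      = ((m0.1 • S + m0.2 • T) (H v) - ((G v).1 • S + (G v).2 • T) w1) := by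
    intro v
    have h0 := hφ x1 ((0 : K × K), v)
    have hz : lieBk P Q x1 ((0 : K × K), v) = ((0 : K × K), P v) := by
      simp [lieBk, hx1]
    rw [hz, hfv, hfv, hφ1] at h0
    have h1 := congrArg Prod.fst h0
    have h2 := congrArg Prod.snd h0
    simp only [lieBk] at h1 h2
    exact ⟨h1, h2⟩
  have E3Q : ∀ v : V, G (Q v) = 0 ∧ H (Q v)
      = ((m1.1 • S + m1.2 • T) (H v) - ((G v).1 • S + (G v).2 • T) w2) := by
    intro v
    have h0 := hφ x2 ((0 : K × K), v)
    have hz : lieBk P Q x2 ((0 : K × K), v) = ((0 : K × K), Q v) := by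
      simp [lieBk, hx2]
    rw [hz, hfv, hfv, hφ2] at h0
    have h1 := congrArg Prod.fst h0
    have h2 := congrArg Prod.snd h0
    simp only [lieBk] at h1 h2
    exact ⟨h1, h2⟩
  -- E4
  have E4 : (m0.1 • S + m0.2 • T) w2 = (m1.1 • S + m1.2 • T) w1 := by
    have h0 := hφ x1 x2
    have hz : lieBk P Q x1 x2 = 0 := by
      simp [lieBk, hx1, hx2]
    rw [hz, map_zero, hφ1, hφ2] at h0
    have h1 := congrArg Prod.snd h0
    simp only [lieBk, Prod.snd_zero] at h1
    exact (sub_eq_zero.mp h1.symm)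
  -- E5
  have E5 : ∀ (c1 c2 : K) (v : V), φ ((0 : K × K), v) = c1 • φ x1 + c2 • φ x2 →
      c1 = 0 ∧ c2 = 0 := by
    intro c1 c2 v hv
    have h0 : φ ((0 : K × K), v) = φ (c1 • x1 + c2 • x2) := by
      rw [map_add, map_smul, map_smul]; exact hv
    have h1 := φ.injective h0
    have h2 : c1 • x1 + c2 • x2 = ((c1, c2), (0 : V)) := by
      rw [hx1, hx2]
      ext
      · show c1 • (1:K) + c2 • (0:K) = c1; simp
      · show c1 • (0:K) + c2 • (1:K) = c2; simp
      · show c1 • (0:V) + c2 • (0:V) = 0; simp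
    rw [h2] at h1
    have h3 := congrArg Prod.fst h1
    constructor
    · have := congrArg Prod.fst h3; simpa using this.symm
    · have := congrArg Prod.snd h3; simpa using this.symm
  -- SPAN
  have SPAN : ∀ y : K × K, ∃ (c1 c2 : K) (v : V), y = c1 • m0 + c2 • m1 + G v := by
    intro y
    obtain ⟨z, hz⟩ := φ.surjective ((y, (0 : W)))
    refine ⟨z.1.1, z.1.2, z.2, ?_⟩
    have hzdec : z = z.1.1 • x1 + z.1.2 • x2 + ((0 : K × K), z.2) := by
      rw [hx1, hx2]
      ext
      · show z.1.1 = z.1.1 • (1:K) + z.1.2 • (0:K) + 0; simp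
      · show z.1.2 = z.1.1 • (0:K) + z.1.2 • (1:K) + 0; simp
      · show z.2 = z.1.1 • (0:V) + z.1.2 • (0:V) + z.2; simp
    have h0 : φ z = z.1.1 • φ x1 + z.1.2 • φ x2 + φ ((0 : K × K), z.2) := by
      rw [← map_smul, ← map_smul, ← map_add, ← map_add, ← hzdec]
    rw [hz, hφ1, hφ2, hfv] at h0
    have h1 := congrArg Prod.fst h0
    simpa using h1
  -- KEY : brackets land in the image of F with zero first component
  have KEY : ∀ z1 z2 : (K × K) × W, ∃ v : V, G v = 0 ∧ H v = (lieBk S T z1 z2).2 := by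
    intro z1 z2
    have h0 : φ (lieBk P Q (φ.symm z1) (φ.symm z2)) = lieBk S T z1 z2 := by
      rw [hφ, φ.apply_symm_apply, φ.apply_symm_apply]
    have h1 : lieBk P Q (φ.symm z1) (φ.symm z2)
        = ((0 : K × K), (lieBk P Q (φ.symm z1) (φ.symm z2)).2) := rfl
    refine ⟨(lieBk P Q (φ.symm z1) (φ.symm z2)).2, ?_, ?_⟩
    · have h2 : φ ((0 : K × K), (lieBk P Q (φ.symm z1) (φ.symm z2)).2) = lieBk S T z1 z2 := by
        rw [← h1, h0]
      rw [hfv] at h2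
      have h3 := congrArg Prod.fst h2
      simp only at h3
      rw [h3]
      rfl
    · have h2 : φ ((0 : K × K), (lieBk P Q (φ.symm z1) (φ.symm z2)).2) = lieBk S T z1 z2 := by
        rw [← h1, h0]
      rw [hfv] at h2
      exact congrArg Prod.snd h2
  have KEYS : ∀ w : W, ∃ v : V, G v = 0 ∧ H v = S w := by
    intro w
    obtain ⟨v, hv1, hv2⟩ := KEY (((1:K), (0:K)), (0:W)) ((0 : K × K), w)
    refine ⟨v, hv1, ?_⟩
    rw [hv2]
    show (((1:K) • S + (0:K) • T) w - ((0:K) • S + (0:K) • T) 0) = S w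
    simp
  have KEYT : ∀ w : W, ∃ v : V, G v = 0 ∧ H v = T w := by
    intro w
    obtain ⟨v, hv1, hv2⟩ := KEY (((0:K), (1:K)), (0:W)) ((0 : K × K), w)
    refine ⟨v, hv1, ?_⟩
    rw [hv2]
    show (((0:K) • S + (1:K) • T) w - ((0:K) • S + (0:K) • T) 0) = T w
    simp
  have hinjF : ∀ v : V, G v = 0 → H v = 0 → v = 0 := by
    intro v h1 h2
    have h3 : φ ((0 : K × K), v) = 0 := by rw [hfv, h1, h2]; rfl
    have h4 : ((0 : K × K), v) = ((0 : K × K), (0 : V)) := by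
      apply φ.injective
      rw [h3]; exact (map_zero φ).symm
    exact congrArg Prod.snd h4
  have hn7W : 7 ≤ finrank K W := hdim ▸ hdim7
  -- main case split
  by_cases hg0 : ∀ v : V, G v = 0
  · -- CASE 1
    have hinjH : Function.Injective H := by
      rw [← LinearMap.ker_eq_bot]
      apply (Submodule.eq_bot_iff _).mpr
      intro v hv
      exact hinjF v (hg0 v) (LinearMap.mem_ker.mp hv)
    have hdt : m0.1 * m1.2 - m0.2 * m1.1 ≠ 0 := by
      intro hdt0
      by_cases hm00 : m0 = 0
      · apply not_line (K := K) m1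
        intro y
        obtain ⟨c1, c2, v, hy⟩ := SPAN y
        exact ⟨c2, by rw [hy, hm00, hg0 v]; module⟩
      · obtain ⟨t, ht⟩ := dep_of_dt hm00 hdt0
        apply not_line (K := K) m0
        intro y
        obtain ⟨c1, c2, v, hy⟩ := SPAN y
        exact ⟨c1 + c2 * t, by rw [hy, ht, hg0 v]; module⟩
    apply packWeak
    refine ⟨m0, m1, hdt, H.linearEquivOfInjective hinjH hdim, ?_⟩
    intro v
    rw [LinearMap.linearEquivOfInjective_apply, LinearMap.linearEquivOfInjective_apply,
      LinearMap.linearEquivOfInjective_apply]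
    constructor
    · rw [(E3P v).2, hg0 v]
      simp
    · rw [(E3Q v).2, hg0 v]
      simp
  · push_neg at hg0
    obtain ⟨v0, hv0ne⟩ := hg0
    by_cases hind : ∃ va vb : V, (G va).1 * (G vb).2 - (G va).2 * (G vb).1 ≠ 0
    · -- CASE 2a : contradiction
      exfalso
      obtain ⟨va, vb, hd⟩ := hind
      set X0 : Submodule K W := Submodule.map H (LinearMap.ker G) with hX0
      have him : ∀ w : W, S w ∈ X0 ∧ T w ∈ X0 := by
        intro w
        constructor
        · obtain ⟨v, hv1, hv2⟩ := KEYS w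
          exact ⟨v, LinearMap.mem_ker.mpr hv1, hv2⟩
        · obtain ⟨v, hv1, hv2⟩ := KEYT w
          exact ⟨v, LinearMap.mem_ker.mpr hv1, hv2⟩
      have hker : ∀ x ∈ X0, S x = 0 ∧ T x = 0 := by
        rintro _ ⟨v, hv, rfl⟩
        have hv' : G v = 0 := hv
        have h1 := E1 va v
        have h2 := E1 vb v
        rw [hv'] at h1 h2
        simp only [Prod.fst_zero, Prod.snd_zero, zero_smul, add_zero, zero_add] at h1 h2
        exact solve2 hd h1 h2
      have hrank : finrank K W - 2 ≤ finrank K X0 := by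
        have h1 : finrank K X0 = finrank K (LinearMap.ker G) := finrank_map_ker H G hinjF
        have h2 := LinearMap.finrank_range_add_finrank_ker G
        have h3 : finrank K (LinearMap.range G) ≤ 2 := by
          have h4 := Submodule.finrank_le (LinearMap.range G)
          have h5 : finrank K (K × K) = 2 := by
            rw [Module.finrank_prod, finrank_self]
          omega
        omega
      exact indec_contra S T X0 hrank him hker hn7W hW
    · -- CASE 2b
      push_neg at hind
      set p : K × K := G v0 with hp
      have hdepAll : ∀ v, ∃ t : K, G v = t • p := fun v => dep_of_dt hv0ne (hind v0 v)
      obtain ⟨l, hGl⟩ := mk_ell G p hv0ne hdepAll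
      have hv0l : l v0 = 1 := by
        have h1 : l v0 • p = (1 : K) • p := by rw [← hGl v0, one_smul]
        have h2 : (l v0 - 1) • p = 0 := by rw [sub_smul, h1, one_smul, sub_self]
        have h3 := (smul_eq_zero.mp h2).resolve_right hv0ne
        exact sub_eq_zero.mp h3
      have hlP : ∀ v, l (P v) = 0 := by
        intro v
        have h1 := (E3P v).1
        rw [hGl (P v)] at h1
        exact (smul_eq_zero.mp h1).resolve_right hv0ne
      have hlQ : ∀ v, l (Q v) = 0 := by
        intro v
        have h1 := (E3Q v).1
        rw [hGl (Q v)] at h1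
        exact (smul_eq_zero.mp h1).resolve_right hv0ne
      have hkerGl : LinearMap.ker G = LinearMap.ker l := by
        ext v
        rw [LinearMap.mem_ker, LinearMap.mem_ker]
        constructor
        · intro h1; rw [hGl v] at h1; exact (smul_eq_zero.mp h1).resolve_right hv0ne
        · intro h1; rw [hGl v, h1, zero_smul]
      have hinjl : ∀ v, l v = 0 → H v = 0 → v = 0 := by
        intro v h1 h2
        exact hinjF v (by rw [hGl v, h1, zero_smul]) h2
      have hXrank : finrank K (Submodule.map H (LinearMap.ker l)) + 1 = finrank K W := by
        have h1 : finrank K (Submodule.map H (LinearMap.ker l)) = finrank K (LinearMap.ker l) :=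
          finrank_map_ker H l hinjl
        have h2 := LinearMap.finrank_range_add_finrank_ker l
        have h3 : LinearMap.range l = ⊤ := by
          rw [LinearMap.range_eq_top]
          intro t
          exact ⟨t • v0, by rw [map_smul, hv0l, smul_eq_mul, mul_one]⟩
        rw [h3, finrank_top, finrank_self] at h2
        omega
      have E3P' : ∀ v, H (P v) = (m0.1 • S + m0.2 • T) (H v) - l v • ((p.1 • S + p.2 • T) w1) := by
        intro v
        rw [(E3P v).2, hGl v]
        simp only [Prod.smul_fst, Prod.smul_snd, smul_eq_mul, LinearMap.add_apply,
          LinearMap.smul_apply]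
        module
      have E3Q' : ∀ v, H (Q v) = (m1.1 • S + m1.2 • T) (H v) - l v • ((p.1 • S + p.2 • T) w2) := by
        intro v
        rw [(E3Q v).2, hGl v]
        simp only [Prod.smul_fst, Prod.smul_snd, smul_eq_mul, LinearMap.add_apply,
          LinearMap.smul_apply]
        module
      have hRh : ∀ v, (p.1 • S + p.2 • T) (H v) = l v • ((p.1 • S + p.2 • T) (H v0)) := by
        intro v
        have h1 := E1 v0 v
        rw [hGl v] at h1
        rw [← hp] at h1
        simp only [Prod.smul_fst, Prod.smul_snd, smul_eq_mul, LinearMap.add_apply,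
          LinearMap.smul_apply] at h1 ⊢
        linear_combination (norm := module) h1
      have hIND : ∀ c1 c2 s : K, c1 • m0 + c2 • m1 = s • p →
          c1 • w1 + c2 • w2 - s • H v0 ∈ Submodule.map H (LinearMap.ker l) →
          c1 = 0 ∧ c2 = 0 := by
        intro c1 c2 s hmm hmem
        obtain ⟨u, hu0, huv⟩ := hmem
        have hu : l u = 0 := hu0
        apply E5 c1 c2 (s • v0 + u)
        rw [hfv, hφ1, hφ2]
        have hGsv : G (s • v0 + u) = s • p := by
          rw [map_add, map_smul, hGl u, hu, zero_smul, add_zero, ← hp]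
        have hHsv : H (s • v0 + u) = c1 • w1 + c2 • w2 := by
          rw [map_add, map_smul, huv]
          module
        rw [hGsv, hHsv]
        have : c1 • ((m0, w1) : (K × K) × W) + c2 • (m1, w2)
            = (c1 • m0 + c2 • m1, c1 • w1 + c2 • w2) := rfl
        rw [this, hmm]
      have hSPAN : ∀ y : K × K, ∃ s c1 c2 : K, y = s • p + c1 • m0 + c2 • m1 := by
        intro y
        obtain ⟨c1, c2, v, hy⟩ := SPAN y
        exact ⟨l v, c1, c2, by rw [hy, hGl v]; module⟩
      apply packWeak
      exact core2b P Q S T H l v0 p m0 m1 w1 w2 hdim hv0ne hv0l hlP hlQ hinjl hXrank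
        E3P' E3Q' E4 hRh hIND hSPAN


/-- Theorem 2: indecomposable modules of equal dimension ≥ 7 are
weakly isomorphic iff their associated Lie algebras are isomorphic. -/
theorem stmt_18 {K V W : Type*} [Field K] [IsAlgClosed K] [CharZero K]
    [AddCommGroup V] [Module K V] [AddCommGroup W] [Module K W]
    [FiniteDimensional K V] [FiniteDimensional K W]
    (P Q : V →ₗ[K] V) (S T : W →ₗ[K] W)
    (hPQ : ∀ v, P (Q v) = Q (P v)) (hST : ∀ w, S (T w) = T (S w))
    (hV : IndecModule P Q) (hW : IndecModule S T)
    (hdim : Module.finrank K V = Module.finrank K W)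
    (hdim7 : 7 ≤ Module.finrank K V) :
    WeakIso P Q S T ↔
      ∃ φ : ((K × K) × V) ≃ₗ[K] ((K × K) × W),
        ∀ a b, φ (lieBk P Q a b) = lieBk S T (φ a) (φ b) := by
  constructor
  · intro hwi
    obtain ⟨M, hM, e, he⟩ := hwi
    have hdet : M 0 0 * M 1 1 - M 0 1 * M 1 0 ≠ 0 := by
      have h1 : IsUnit M.det := (Matrix.isUnit_iff_isUnit_det M).mp hM
      rw [Matrix.det_fin_two] at h1
      exact isUnit_iff_ne_zero.mp h1
    set A : (K × K) →ₗ[K] (K × K) :=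
      { toFun := fun y => (y.1 * M 0 0 + y.2 * M 1 0, y.1 * M 0 1 + y.2 * M 1 1),
        map_add' := by intro y z; ext <;> simp <;> ring,
        map_smul' := by intro c y; ext <;> simp [smul_eq_mul] <;> ring } with hA
    have hAapp : ∀ y : K × K, A y = (y.1 * M 0 0 + y.2 * M 1 0, y.1 * M 0 1 + y.2 * M 1 1) :=
      fun y => rfl
    have hAinj : Function.Injective A := by
      rw [← LinearMap.ker_eq_bot]
      apply (Submodule.eq_bot_iff _).mpr
      intro y hy
      rw [LinearMap.mem_ker] at hy
      have h1 : y.1 * M 0 0 + y.2 * M 1 0 = 0 := by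
        have := congrArg Prod.fst hy; simpa [hAapp] using this
      have h2 : y.1 * M 0 1 + y.2 * M 1 1 = 0 := by
        have := congrArg Prod.snd hy; simpa [hAapp] using this
      have hy1 : y.1 = 0 := by
        have h3 : y.1 * (M 0 0 * M 1 1 - M 0 1 * M 1 0) = 0 := by linear_combination M 1 1 * h1 - M 1 0 * h2
        exact (mul_eq_zero.mp h3).resolve_right hdet
      have hy2 : y.2 = 0 := by
        have h3 : y.2 * (M 0 0 * M 1 1 - M 0 1 * M 1 0) = 0 := by linear_combination -M 0 1 * h1 + M 0 0 * h2
        exact (mul_eq_zero.mp h3).resolve_right hdet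
      exact Prod.ext hy1 hy2
    have hAbij : Function.Bijective A := ⟨hAinj, (LinearMap.injective_iff_surjective).mp hAinj⟩
    set Aeq : (K × K) ≃ₗ[K] (K × K) := LinearEquiv.ofBijective A hAbij with hAeq
    refine ⟨Aeq.prodCongr e, ?_⟩
    intro a b
    have happ : ∀ z : (K × K) × V, (Aeq.prodCongr e) z = (A z.1, e z.2) := fun z => rfl
    rw [happ, happ, happ]
    show (A (0:K×K), e _) = lieBk S T _ _
    apply Prod.ext
    · show A 0 = (0 : K × K)
      exact map_zero A
    · show e ((a.1.1 • P + a.1.2 • Q) b.2 - (b.1.1 • P + b.1.2 • Q) a.2)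
        = ((A a.1).1 • S + (A a.1).2 • T) (e b.2) - ((A b.1).1 • S + (A b.1).2 • T) (e a.2)
      rw [hAapp, hAapp]
      simp only [map_sub, LinearMap.add_apply, LinearMap.smul_apply, map_add, map_smul]
      have heb := he b.2
      have hea := he a.2
      simp only [LinearMap.add_apply, LinearMap.smul_apply] at heb hea
      rw [heb.1, heb.2, hea.1, hea.2]
      module
  · rintro ⟨φ, hφ⟩
    exact backward P Q S T hW hdim hdim7 φ hφ
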